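/- On the field F = GF(3²) with 9 elements, define a new multiplication by x ∘ y = x·y if y is a square in F (i.e., y = z² for some z ∈ F), and x ∘ y = x³·y otherwise. Then ∘ is associative: (x ∘ y) ∘ z = x ∘ (y ∘ z) for all x, y, z ∈ F. -/

import Mathlib

instance : Fact (Nat.Prime 3) := ⟨by norm_num⟩

open Classical in
/-- The Dickson multiplication on `GF(3²)`: `x ∘ y = x·y` if `y` is a square and
`x ∘ y = x³·y` otherwise. -/
noncomputable def dicksonMul (x y : GaloisField 3 2) : GaloisField 3 2 :=
  if ∃ z : GaloisField 3 2, y = z ^ 2 then x * y else x ^ 3 * y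

private lemma gf_cond_iff (y : GaloisField 3 2) :
    (∃ z : GaloisField 3 2, y = z ^ 2) ↔ IsSquare y := by
  constructor <;> rintro ⟨w, h⟩ <;> exact ⟨w, by rw [h]; ring⟩

open Classical in
private lemma gf_isSquare_mul_iff {y z : GaloisField 3 2} (hy : y ≠ 0) (hz : z ≠ 0) :
    IsSquare (y * z) ↔ (IsSquare y ↔ IsSquare z) := by
  haveI : Fintype (GaloisField 3 2) := Fintype.ofFinite _
  have hyz : y * z ≠ 0 := mul_ne_zero hy hz
  rw [← quadraticChar_one_iff_isSquare hyz, ← quadraticChar_one_iff_isSquare hy,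
    ← quadraticChar_one_iff_isSquare hz, map_mul]
  rcases quadraticChar_dichotomy hy with h1 | h1 <;>
    rcases quadraticChar_dichotomy hz with h2 | h2 <;>
      simp [h1, h2]

private lemma dicksonMul_sq (x : GaloisField 3 2) {y : GaloisField 3 2} (h : IsSquare y) :
    dicksonMul x y = x * y := if_pos ((gf_cond_iff y).mpr h)

private lemma dicksonMul_nsq (x : GaloisField 3 2) {y : GaloisField 3 2} (h : ¬ IsSquare y) :
    dicksonMul x y = x ^ 3 * y := if_neg (fun hc => h ((gf_cond_iff y).mp hc))

private lemma gf_pow_nine (x : GaloisField 3 2) : x ^ 9 = x := by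
  haveI : Fintype (GaloisField 3 2) := Fintype.ofFinite _
  have h := FiniteField.pow_card x
  rwa [← Nat.card_eq_fintype_card, GaloisField.card 3 2 (by norm_num)] at h

/-- The Dickson multiplication `∘` on `GF(3²)` is associative. -/
theorem dicksonMul_assoc :
    ∀ x y z : GaloisField 3 2,
      dicksonMul (dicksonMul x y) z = dicksonMul x (dicksonMul y z) := by
  intro x y z
  rcases eq_or_ne y 0 with hy0 | hy0
  · subst hy0; unfold dicksonMul; split_ifs <;> simp
  rcases eq_or_ne z 0 with hz0 | hz0
  · subst hz0; unfold dicksonMul; split_ifs <;> simp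
  by_cases hy : IsSquare y <;> by_cases hz : IsSquare z
  · have hyz : IsSquare (y * z) := hy.mul hz
    rw [dicksonMul_sq x hy, dicksonMul_sq (x * y) hz, dicksonMul_sq y hz,
      dicksonMul_sq x hyz, mul_assoc]
  · have h3 : IsSquare (y ^ 3) := by
      have h : y ^ 3 = y * y ^ 2 := by ring
      rw [h]; exact hy.mul (IsSquare.sq y)
    have h3z : ¬ IsSquare (y ^ 3 * z) := by
      rw [gf_isSquare_mul_iff (pow_ne_zero 3 hy0) hz0]
      simp [h3, hz]
    rw [dicksonMul_sq x hy, dicksonMul_nsq (x * y) hz, dicksonMul_nsq y hz,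
      dicksonMul_nsq x h3z]
    ring
  · have hyz : ¬ IsSquare (y * z) := by
      rw [gf_isSquare_mul_iff hy0 hz0]
      simp [hy, hz]
    rw [dicksonMul_nsq x hy, dicksonMul_sq (x ^ 3 * y) hz, dicksonMul_sq y hz,
      dicksonMul_nsq x hyz]
    ring
  · have hyz : IsSquare (y * z) := by
      rw [gf_isSquare_mul_iff hy0 hz0]; simp [hy, hz]
    have h3z : IsSquare (y ^ 3 * z) := by
      have h : y ^ 3 * z = y ^ 2 * (y * z) := by ring
      rw [h]; exact (IsSquare.sq y).mul hyz
    rw [dicksonMul_nsq x hy, dicksonMul_nsq (x ^ 3 * y) hz, dicksonMul_nsq y hz,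
      dicksonMul_sq x h3z]
    have h9 := gf_pow_nine x
    calc (x ^ 3 * y) ^ 3 * z = x ^ 9 * (y ^ 3 * z) := by ring
      _ = x * (y ^ 3 * z) := by rw [h9]
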